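/- Let a > b > 0, let A be a complex n×n matrix whose spectrum belongs to E_e = {λ ∈ ℂ : (Re λ)²/a² + (Im λ)²/b² > 1}, and let H be a Hermitian positive definite matrix satisfying H − (1/(2a²) + 1/(2b²))·A*HA − (1/(4a²) − 1/(4b²))·(HA² + (A*)²H) = −I. If B is a complex n×n matrix such that −I < (1/(2a²) + 1/(2b²))·(B*HA + A*HB + B*HB) + (1/(4a²) − 1/(4b²))·(H(AB + BA + B²) + (AB + BA + B²)*H) (i.e., this matrix plus I is positive definite), then the spectrum of A + B also belongs to E_e. -/

import Mathlib

open Matrix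
open scoped ComplexOrder

/-- Perturbation theorem for the exterior of the ellipse: if the spectrum of `A`
lies in `E_e`, `H > 0` solves the elliptic Lyapunov-type equation with right-hand
side `-I`, and the perturbation `B` satisfies the matrix inequality (11), then the
spectrum of `A + B` also lies in `E_e`. -/
theorem spectrum_perturbed_in_ellipse_exterior {n : ℕ} (a b : ℝ) (hba : b < a) (hb : 0 < b)
    (A : Matrix (Fin n) (Fin n) ℂ)
    (hA : ∀ μ ∈ spectrum ℂ A, 1 < μ.re ^ 2 / a ^ 2 + μ.im ^ 2 / b ^ 2)
    (H : Matrix (Fin n) (Fin n) ℂ) (hH : H.PosDef)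
    (heq : H - ((1 / (2 * a ^ 2) + 1 / (2 * b ^ 2) : ℝ) : ℂ) • (Aᴴ * H * A)
      - ((1 / (4 * a ^ 2) - 1 / (4 * b ^ 2) : ℝ) : ℂ) • (H * A ^ 2 + Aᴴ ^ 2 * H) = -1)
    (B : Matrix (Fin n) (Fin n) ℂ)
    (hB : (((1 / (2 * a ^ 2) + 1 / (2 * b ^ 2) : ℝ) : ℂ) • (Bᴴ * H * A + Aᴴ * H * B + Bᴴ * H * B)
      + ((1 / (4 * a ^ 2) - 1 / (4 * b ^ 2) : ℝ) : ℂ) •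
        (H * (A * B + B * A + B ^ 2) + (A * B + B * A + B ^ 2)ᴴ * H) + 1).PosDef) :
    ∀ μ ∈ spectrum ℂ (A + B), 1 < μ.re ^ 2 / a ^ 2 + μ.im ^ 2 / b ^ 2 := by
  have ha : 0 < a := hb.trans hba
  intro μ hμ
  set αr : ℝ := 1 / (2 * a ^ 2) + 1 / (2 * b ^ 2) with hαr
  set βr : ℝ := 1 / (4 * a ^ 2) - 1 / (4 * b ^ 2) with hβr
  set c : Matrix (Fin n) (Fin n) ℂ := A + B with hc
  -- eigenvector
  obtain ⟨v, hv0, hveq⟩ : ∃ v, v ≠ 0 ∧ c *ᵥ v = μ • v := by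
    rw [← AlgEquiv.spectrum_eq (Matrix.toLinAlgEquiv' (R := ℂ) (n := Fin n)),
      ← Module.End.hasEigenvalue_iff_mem_spectrum] at hμ
    obtain ⟨v, hv⟩ := hμ.exists_hasEigenvector
    exact ⟨v, hv.2, by simpa [Matrix.toLinAlgEquiv'_apply] using hv.apply_eq_smul⟩
  set X1 : Matrix (Fin n) (Fin n) ℂ := Bᴴ * H * A + Aᴴ * H * B + Bᴴ * H * B with hX1
  set X2 : Matrix (Fin n) (Fin n) ℂ := A * B + B * A + B ^ 2 with hX2
  -- matrix identity for c
  have hcH : cᴴ * H * c = Aᴴ * H * A + X1 := by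
    rw [hc, hX1, conjTranspose_add]; noncomm_ring
  have hc2 : c ^ 2 = A ^ 2 + X2 := by rw [hc, hX2]; noncomm_ring
  have hcH2 : cᴴ ^ 2 = Aᴴ ^ 2 + X2ᴴ := by
    rw [← conjTranspose_pow, ← conjTranspose_pow, ← conjTranspose_add, hc2]
  have hM : H - (αr : ℂ) • (cᴴ * H * c) - (βr : ℂ) • (H * c ^ 2 + cᴴ ^ 2 * H)
      = -((αr : ℂ) • X1 + (βr : ℂ) • (H * X2 + X2ᴴ * H) + 1) := by
    rw [hcH, hc2, hcH2]
    rw [show H * (A ^ 2 + X2) = H * A ^ 2 + H * X2 from mul_add _ _ _,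
      show (Aᴴ ^ 2 + X2ᴴ) * H = Aᴴ ^ 2 * H + X2ᴴ * H from add_mul _ _ _]
    have h2 : H - (αr : ℂ) • (Aᴴ * H * A + X1)
        - (βr : ℂ) • (H * A ^ 2 + H * X2 + (Aᴴ ^ 2 * H + X2ᴴ * H))
        = (H - (αr : ℂ) • (Aᴴ * H * A) - (βr : ℂ) • (H * A ^ 2 + Aᴴ ^ 2 * H))
          - ((αr : ℂ) • X1 + (βr : ℂ) • (H * X2 + X2ᴴ * H)) := by
      simp only [smul_add]; abel
    rw [h2, heq]; abel
  -- scalar quantities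
  set q : ℂ := star v ⬝ᵥ (H *ᵥ v) with hq
  have hqpos : 0 < q := hH.dotProduct_mulVec_pos hv0
  have hs : 0 < star v ⬝ᵥ (((αr : ℂ) • X1 + (βr : ℂ) • (H * X2 + X2ᴴ * H) + 1) *ᵥ v) :=
    hB.dotProduct_mulVec_pos hv0
  -- eigen computations
  have e1 : star v ⬝ᵥ ((cᴴ * H * c) *ᵥ v) = (starRingEnd ℂ) μ * μ * q := by
    rw [← mulVec_mulVec, ← mulVec_mulVec, hveq, mulVec_smul, mulVec_smul,
      dotProduct_smul, dotProduct_mulVec, ← star_mulVec, hveq, star_smul,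
      smul_dotProduct, hq]
    simp [mul_assoc, mul_comm, mul_left_comm]
  have e2 : star v ⬝ᵥ ((H * c ^ 2) *ᵥ v) = μ ^ 2 * q := by
    rw [← mulVec_mulVec, show c ^ 2 = c * c from sq c, ← mulVec_mulVec, hveq,
      mulVec_smul, hveq, smul_smul, mulVec_smul, dotProduct_smul, hq, ← sq,
      smul_eq_mul]
  have e3 : star v ⬝ᵥ ((cᴴ ^ 2 * H) *ᵥ v) = ((starRingEnd ℂ) μ) ^ 2 * q := by
    rw [← mulVec_mulVec, ← conjTranspose_pow, dotProduct_mulVec, ← star_mulVec,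
      show c ^ 2 = c * c from sq c, ← mulVec_mulVec, hveq, mulVec_smul, hveq,
      smul_smul, star_smul, smul_dotProduct, hq, ← sq]
    simp [smul_eq_mul]
  -- combine
  have key : (1 - (αr : ℂ) * ((starRingEnd ℂ) μ * μ)
      - (βr : ℂ) * (μ ^ 2 + ((starRingEnd ℂ) μ) ^ 2)) * q
      = -(star v ⬝ᵥ (((αr : ℂ) • X1 + (βr : ℂ) • (H * X2 + X2ᴴ * H) + 1) *ᵥ v)) := by
    have := congrArg (fun X : Matrix (Fin n) (Fin n) ℂ => star v ⬝ᵥ (X *ᵥ v)) hM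
    simp only [sub_mulVec, smul_mulVec, add_mulVec, neg_mulVec, dotProduct_sub,
      dotProduct_smul, dotProduct_add, dotProduct_neg, e1, e2, e3, smul_eq_mul] at this ⊢
    linear_combination this
  have hcoeff : (1 - (αr : ℂ) * ((starRingEnd ℂ) μ * μ)
      - (βr : ℂ) * (μ ^ 2 + ((starRingEnd ℂ) μ) ^ 2))
      = ((1 - αr * (μ.re ^ 2 + μ.im ^ 2) - 2 * βr * (μ.re ^ 2 - μ.im ^ 2) : ℝ) : ℂ) := by
    apply Complex.ext <;>
      simp [Complex.mul_re, Complex.mul_im, pow_two] <;> ring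
  rw [hcoeff] at key
  set r : ℝ := 1 - αr * (μ.re ^ 2 + μ.im ^ 2) - 2 * βr * (μ.re ^ 2 - μ.im ^ 2) with hr
  have hql := Complex.lt_def.mp hqpos
  have hsl := Complex.lt_def.mp hs
  have hre : r * q.re
      = -(star v ⬝ᵥ (((αr : ℂ) • X1 + (βr : ℂ) • (H * X2 + X2ᴴ * H) + 1) *ᵥ v)).re := by
    have h := congrArg Complex.re key
    rwa [Complex.neg_re, Complex.re_ofReal_mul] at h
  have hq0 : 0 < q.re := by simpa using hql.1
  have hs0 : 0 < (star v ⬝ᵥ (((αr : ℂ) • X1 + (βr : ℂ) • (H * X2 + X2ᴴ * H) + 1) *ᵥ v)).re := by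
    simpa using hsl.1
  have hrneg : r < 0 := by
    by_contra h
    push_neg at h
    nlinarith [mul_nonneg h hq0.le]
  have hkey2 : 1 < αr * (μ.re ^ 2 + μ.im ^ 2) + 2 * βr * (μ.re ^ 2 - μ.im ^ 2) := by
    rw [hr] at hrneg; linarith
  have hident : αr * (μ.re ^ 2 + μ.im ^ 2) + 2 * βr * (μ.re ^ 2 - μ.im ^ 2)
      = μ.re ^ 2 / a ^ 2 + μ.im ^ 2 / b ^ 2 := by
    rw [hαr, hβr]; field_simp; ring
  exact hident ▸ hkey2
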